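/- arXiv:2509.02829 — 3 statements merged into one kernel-verified Lean document; each statement's English description precedes it below -/
import Mathlib

section
/- Fix a nonempty J ⊆ [d], a target probability array s^J on [n]^{|J|}, and a probability array q† on [n]^d with supp(s^J) ⊆ supp(q†^(J)), where q†^(J) is the J-margin of q†. Then the I-projection q* of q† on the Fréchet class F_J = {p : p^(J) = s^J} exists, is unique, and equals q*_i = q†_i · s^J_{i_J} / q†^(J)_{i_J} for i ∈ supp(q†) and 0 otherwise. -/
open Real BigOperators ENNReal

def IsProbArray {ι : Type*} [Fintype ι] (p : ι → ℝ) : Prop :=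
  (∀ i, 0 ≤ p i) ∧ ∑ i : ι, p i = 1

noncomputable def klArr {ι : Type*} [Fintype ι] (p q : ι → ℝ) : ℝ≥0∞ :=
  open scoped Classical in
  if ∀ i, q i = 0 → p i = 0
  then ENNReal.ofReal (∑ i : ι, p i * Real.log (p i / q i)) else ⊤

/-- The `J`-margin of a probability array on `[n]^d`. -/
noncomputable def marginArr {d n : ℕ} (p : (Fin d → Fin n) → ℝ)
    (J : Finset (Fin d)) (iJ : J → Fin n) : ℝ :=
  open scoped Classical in
  ∑ i ∈ Finset.univ.filter (fun i : Fin d → Fin n => ∀ j : J, i j = iJ j), p i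



lemma gibbs_pointwise {f g : ℝ} (hf : 0 ≤ f) (hg : 0 ≤ g) (hac : g = 0 → f = 0) :
    f * Real.log (g / f) ≤ g - f := by
  rcases eq_or_lt_of_le hf with h | h
  · simpa [← h] using hg
  · have hg' : 0 < g := by
      rcases eq_or_lt_of_le hg with h0 | h0
      · exact absurd (hac h0.symm) (by linarith)
      · exact h0
    have hx : 0 < g / f := div_pos hg' h
    have h1 := Real.log_le_sub_one_of_pos hx
    have : f * Real.log (g / f) ≤ f * (g / f - 1) := by
      exact mul_le_mul_of_nonneg_left h1 hf
    calc f * Real.log (g / f) ≤ f * (g / f - 1) := this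
      _ = g - f := by field_simp

lemma gibbs_nonneg {ι : Type*} [Fintype ι] (f g : ι → ℝ)
    (hf : ∀ i, 0 ≤ f i) (hg : ∀ i, 0 ≤ g i)
    (hf1 : ∑ i, f i = 1) (hg1 : ∑ i, g i = 1)
    (hac : ∀ i, g i = 0 → f i = 0) :
    0 ≤ ∑ i, f i * Real.log (f i / g i) := by
  have key : ∀ i, f i * Real.log (f i / g i) = -(f i * Real.log (g i / f i)) := by
    intro i
    rcases eq_or_lt_of_le (hf i) with h | h
    · simp [← h]
    · have hgi : 0 < g i := by
        rcases eq_or_lt_of_le (hg i) with h0 | h0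
        · exact absurd (hac i h0.symm) (by linarith)
        · exact h0
      rw [Real.log_div (by linarith) (by linarith), Real.log_div (by linarith) (by linarith)]
      ring
  have hle : ∑ i, f i * Real.log (g i / f i) ≤ 0 := by
    calc ∑ i, f i * Real.log (g i / f i) ≤ ∑ i, (g i - f i) :=
          Finset.sum_le_sum fun i _ => gibbs_pointwise (hf i) (hg i) (hac i)
      _ = 0 := by rw [Finset.sum_sub_distrib, hf1, hg1]; ring
  simp only [key, Finset.sum_neg_distrib]
  linarith

lemma gibbs_eq {ι : Type*} [Fintype ι] (f g : ι → ℝ)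
    (hf : ∀ i, 0 ≤ f i) (hg : ∀ i, 0 ≤ g i)
    (hf1 : ∑ i, f i = 1) (hg1 : ∑ i, g i = 1)
    (hac : ∀ i, g i = 0 → f i = 0)
    (hsum : ∑ i, f i * Real.log (f i / g i) ≤ 0) : f = g := by
  have key : ∀ i, f i * Real.log (f i / g i) = -(f i * Real.log (g i / f i)) := by
    intro i
    rcases eq_or_lt_of_le (hf i) with h | h
    · simp [← h]
    · have hgi : 0 < g i := by
        rcases eq_or_lt_of_le (hg i) with h0 | h0
        · exact absurd (hac i h0.symm) (by linarith)
        · exact h0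
      rw [Real.log_div (by linarith) (by linarith), Real.log_div (by linarith) (by linarith)]
      ring
  have hge : 0 ≤ ∑ i, f i * Real.log (g i / f i) := by
    have := hsum
    simp only [key, Finset.sum_neg_distrib] at this
    linarith
  have hzero : ∑ i, (g i - f i - f i * Real.log (g i / f i)) = 0 := by
    have hsub : ∑ i, (g i - f i) = 0 := by
      rw [Finset.sum_sub_distrib, hf1, hg1]; ring
    have hle : ∑ i, f i * Real.log (g i / f i) ≤ 0 := by
      calc ∑ i, f i * Real.log (g i / f i) ≤ ∑ i, (g i - f i) :=
            Finset.sum_le_sum fun i _ => gibbs_pointwise (hf i) (hg i) (hac i)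
        _ = 0 := hsub
    have h0 : ∑ i, f i * Real.log (g i / f i) = 0 := le_antisymm hle hge
    simp only [Finset.sum_sub_distrib]
    rw [hf1, hg1, h0]; ring
  have hterm : ∀ i ∈ Finset.univ, g i - f i - f i * Real.log (g i / f i) = 0 := by
    refine (Finset.sum_eq_zero_iff_of_nonneg fun i _ => ?_).1 hzero
    linarith [gibbs_pointwise (hf i) (hg i) (hac i)]
  funext i
  have hi := hterm i (Finset.mem_univ i)
  rcases eq_or_lt_of_le (hf i) with h | h
  · rw [← h] at hi ⊢
    simp at hi; linarith
  · have hgi : 0 < g i := by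
      rcases eq_or_lt_of_le (hg i) with h0 | h0
      · exact absurd (hac i h0.symm) (by linarith)
      · exact h0
    by_contra hne
    have hx : g i / f i ≠ 1 := by
      intro h1
      exact hne ((div_eq_one_iff_eq (by linarith)).1 h1).symm
    have := Real.log_lt_sub_one_of_pos (div_pos hgi h) hx
    have h2 : f i * Real.log (g i / f i) < f i * (g i / f i - 1) :=
      mul_lt_mul_of_pos_left this h
    have h3 : f i * (g i / f i - 1) = g i - f i := by field_simp
    linarith

/-- The `I`-projection of `q†` on the Fréchet class `F_J = {p : p^(J) = s^J}`
exists, is unique, and is given by marginal scaling. -/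
theorem Iprojection_on_frechetClass
    (d n : ℕ) (hd : 2 ≤ d) (hn : 2 ≤ n)
    (J : Finset (Fin d)) (hJ : J.Nonempty)
    (sJ : (J → Fin n) → ℝ) (hsJ : IsProbArray sJ)
    (qd : (Fin d → Fin n) → ℝ) (hqd : IsProbArray qd)
    (hsupp : ∀ iJ : J → Fin n, 0 < sJ iJ → 0 < marginArr qd J iJ)
    (FJ : Set ((Fin d → Fin n) → ℝ))
    (hFJ : FJ = {p | IsProbArray p ∧ ∀ iJ : J → Fin n, marginArr p J iJ = sJ iJ})
    (qs : (Fin d → Fin n) → ℝ)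
    (hqs : qs = fun i =>
      qd i * sJ (fun j => i j) / marginArr qd J (fun j => i j)) :
    qs ∈ FJ ∧
    (∀ p ∈ FJ, klArr qs qd ≤ klArr p qd) ∧
    (∀ p ∈ FJ, (∀ p' ∈ FJ, klArr p qd ≤ klArr p' qd) → p = qs) := by
  classical
  -- rewrite of margin as a fiber sum
  have hmargin : ∀ (p : (Fin d → Fin n) → ℝ) (iJ : J → Fin n),
      marginArr p J iJ
        = ∑ i ∈ Finset.univ.filter
            (fun i : Fin d → Fin n => (fun j : J => i j) = iJ), p i := by
    intro p iJ
    unfold marginArr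
    refine Finset.sum_congr ?_ (fun _ _ => rfl)
    refine Finset.filter_congr fun i _ => ?_
    constructor
    · intro h; funext j; exact h j
    · intro h j; rw [← h]
  have hpart : ∀ (F : (Fin d → Fin n) → ℝ),
      ∑ iJ : J → Fin n, ∑ i ∈ Finset.univ.filter
          (fun i : Fin d → Fin n => (fun j : J => i j) = iJ), F i
        = ∑ i, F i := by
    intro F
    exact Finset.sum_fiberwise Finset.univ (fun i : Fin d → Fin n => (fun j : J => i j)) F
  have hm0 : ∀ iJ, 0 ≤ marginArr qd J iJ := by
    intro iJ; rw [hmargin]; exact Finset.sum_nonneg fun i _ => hqd.1 i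
  have hle : ∀ (p : (Fin d → Fin n) → ℝ), (∀ i, 0 ≤ p i) →
      ∀ i, p i ≤ marginArr p J (fun j : J => i j) := by
    intro p hp i
    rw [hmargin]
    exact Finset.single_le_sum (fun k _ => hp k) (by simp)
  have hsJ0 : ∀ iJ, marginArr qd J iJ = 0 → sJ iJ = 0 := by
    intro iJ h
    by_contra hne
    have := hsupp iJ (lt_of_le_of_ne (hsJ.1 iJ) (Ne.symm hne))
    rw [h] at this; exact lt_irrefl 0 this
  have hqs_nonneg : ∀ i, 0 ≤ qs i := by
    intro i; rw [hqs]
    exact div_nonneg (mul_nonneg (hqd.1 i) (hsJ.1 _)) (hm0 _)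
  have hqs_ac : ∀ i, qd i = 0 → qs i = 0 := by
    intro i h; rw [hqs]; simp [h]
  have hqs_margin : ∀ iJ, marginArr qs J iJ = sJ iJ := by
    intro iJ
    rw [hmargin]
    have hpt : ∀ i ∈ Finset.univ.filter
        (fun i : Fin d → Fin n => (fun j : J => i j) = iJ),
        qs i = qd i * (sJ iJ / marginArr qd J iJ) := by
      intro i hi
      have hri : (fun j : J => i j) = iJ := (Finset.mem_filter.1 hi).2
      rw [hqs]; simp only; rw [hri]; ring
    rw [Finset.sum_congr rfl hpt, ← Finset.sum_mul, ← hmargin]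
    by_cases hm : marginArr qd J iJ = 0
    · rw [hm, hsJ0 iJ hm]; simp
    · rw [mul_div_cancel₀ _ hm]
  have hqs_sum : ∑ i, qs i = 1 := by
    rw [← hpart qs]
    calc ∑ iJ : J → Fin n, ∑ i ∈ Finset.univ.filter
          (fun i : Fin d → Fin n => (fun j : J => i j) = iJ), qs i
        = ∑ iJ : J → Fin n, sJ iJ := by
          refine Finset.sum_congr rfl fun iJ _ => ?_
          rw [← hmargin, hqs_margin]
      _ = 1 := hsJ.2
  have hqsProb : IsProbArray qs := ⟨hqs_nonneg, hqs_sum⟩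
  have hqs_mem : qs ∈ FJ := by rw [hFJ]; exact ⟨hqsProb, hqs_margin⟩
  -- absolute continuity of p w.r.t. qs
  have hp_ac_qs : ∀ p ∈ FJ, (∀ i, qd i = 0 → p i = 0) →
      ∀ i, qs i = 0 → p i = 0 := by
    intro p hp hac i hqsi
    rw [hFJ] at hp
    obtain ⟨hpProb, hpm⟩ := hp
    by_cases hqdi : qd i = 0
    · exact hac i hqdi
    · have hmpos : 0 < marginArr qd J (fun j : J => i j) :=
        lt_of_lt_of_le (lt_of_le_of_ne (hqd.1 i) (Ne.symm hqdi)) (hle qd hqd.1 i)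
      rw [hqs] at hqsi; simp only at hqsi
      rcases div_eq_zero_iff.1 hqsi with h | h
      · have hsJi : sJ (fun j : J => i j) = 0 := by
          rcases mul_eq_zero.1 h with h' | h'
          · exact absurd h' hqdi
          · exact h'
        have hmp := hpm (fun j : J => i j)
        have hple := hle p hpProb.1 i
        have := hpProb.1 i
        rw [hmp, hsJi] at hple
        linarith
      · exact absurd h (ne_of_gt hmpos)
  -- key: ratio formula
  have hratio : ∀ i, qd i ≠ 0 →
      qs i / qd i = sJ (fun j : J => i j) / marginArr qd J (fun j : J => i j) := by
    intro i h
    rw [hqs]; simp only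
    rw [mul_div_assoc, mul_div_cancel_left₀ _ h]
  set G : ℝ := ∑ iJ : J → Fin n, sJ iJ * Real.log (sJ iJ / marginArr qd J iJ) with hGdef
  -- claim A
  have hA : ∑ i, qs i * Real.log (qs i / qd i) = G := by
    rw [hGdef, ← hpart (fun i => qs i * Real.log (qs i / qd i))]
    refine Finset.sum_congr rfl fun iJ _ => ?_
    have hpt : ∀ i ∈ Finset.univ.filter
        (fun i : Fin d → Fin n => (fun j : J => i j) = iJ),
        qs i * Real.log (qs i / qd i)
          = qd i * ((sJ iJ / marginArr qd J iJ)
              * Real.log (sJ iJ / marginArr qd J iJ)) := by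
      intro i hi
      have hri : (fun j : J => i j) = iJ := (Finset.mem_filter.1 hi).2
      by_cases hqdi : qd i = 0
      · rw [hqs_ac i hqdi, hqdi]; simp
      · have h1 := hratio i hqdi
        rw [hri] at h1
        rw [h1, hqs]; simp only; rw [hri]; ring
    rw [Finset.sum_congr rfl hpt, ← Finset.sum_mul, ← hmargin]
    by_cases hm : marginArr qd J iJ = 0
    · rw [hm, hsJ0 iJ hm]; simp
    · rw [← mul_assoc, mul_div_cancel₀ _ hm]
  -- claim B
  have hB : ∀ p ∈ FJ, (∀ i, qd i = 0 → p i = 0) →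
      ∑ i, p i * Real.log (qs i / qd i) = G := by
    intro p hp hac
    rw [hFJ] at hp
    obtain ⟨hpProb, hpm⟩ := hp
    rw [hGdef, ← hpart (fun i => p i * Real.log (qs i / qd i))]
    refine Finset.sum_congr rfl fun iJ _ => ?_
    have hpt : ∀ i ∈ Finset.univ.filter
        (fun i : Fin d → Fin n => (fun j : J => i j) = iJ),
        p i * Real.log (qs i / qd i)
          = p i * Real.log (sJ iJ / marginArr qd J iJ) := by
      intro i hi
      have hri : (fun j : J => i j) = iJ := (Finset.mem_filter.1 hi).2
      by_cases hpi : p i = 0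
      · rw [hpi]; simp
      · have hqdi : qd i ≠ 0 := fun h => hpi (hac i h)
        have h1 := hratio i hqdi
        rw [hri] at h1
        rw [h1]
    rw [Finset.sum_congr rfl hpt, ← Finset.sum_mul, ← hmargin, hpm]
  -- claim C
  have hC : ∀ p : (Fin d → Fin n) → ℝ, (∀ i, qs i = 0 → p i = 0) →
      (∀ i, qd i = 0 → p i = 0) →
      ∑ i, p i * Real.log (p i / qd i)
        = (∑ i, p i * Real.log (p i / qs i)) + ∑ i, p i * Real.log (qs i / qd i) := by
    intro p hacs hacd
    rw [← Finset.sum_add_distrib]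
    refine Finset.sum_congr rfl fun i _ => ?_
    by_cases hpi : p i = 0
    · simp [hpi]
    · have hqsi : qs i ≠ 0 := fun h => hpi (hacs i h)
      have hqdi : qd i ≠ 0 := fun h => hpi (hacd i h)
      rw [Real.log_div hpi hqdi, Real.log_div hpi hqsi, Real.log_div hqsi hqdi]
      ring
  have hklqs : klArr qs qd
      = ENNReal.ofReal (∑ i, qs i * Real.log (qs i / qd i)) := by
    unfold klArr; rw [if_pos hqs_ac]
  have hSnn : 0 ≤ ∑ i, qs i * Real.log (qs i / qd i) :=
    gibbs_nonneg qs qd hqs_nonneg hqd.1 hqs_sum hqd.2 hqs_ac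
  refine ⟨hqs_mem, ?_, ?_⟩
  · -- minimality
    intro p hp
    by_cases hpac : ∀ i, qd i = 0 → p i = 0
    · have hpProb : IsProbArray p := by rw [hFJ] at hp; exact hp.1
      have hklp : klArr p qd
          = ENNReal.ofReal (∑ i, p i * Real.log (p i / qd i)) := by
        unfold klArr; rw [if_pos hpac]
      have hacs := hp_ac_qs p hp hpac
      have hdecomp := hC p hacs hpac
      have hGibbs : 0 ≤ ∑ i, p i * Real.log (p i / qs i) :=
        gibbs_nonneg p qs hpProb.1 hqs_nonneg hpProb.2 hqs_sum hacs
      have hBp := hB p hp hpac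
      rw [hklqs, hklp]
      apply ENNReal.ofReal_le_ofReal
      rw [hdecomp, hBp, hA]
      linarith
    · unfold klArr; rw [if_neg hpac]; exact le_top
  · -- uniqueness
    intro p hp hmin
    have h1 := hmin qs hqs_mem
    have hpProb : IsProbArray p := by rw [hFJ] at hp; exact hp.1
    have hpac : ∀ i, qd i = 0 → p i = 0 := by
      by_contra h
      rw [hklqs] at h1
      unfold klArr at h1
      rw [if_neg h] at h1
      exact ENNReal.ofReal_ne_top (top_le_iff.1 h1)
    have hklp : klArr p qd
        = ENNReal.ofReal (∑ i, p i * Real.log (p i / qd i)) := by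
      unfold klArr; rw [if_pos hpac]
    have hacs := hp_ac_qs p hp hpac
    rw [hklp, hklqs] at h1
    have h2 : ∑ i, p i * Real.log (p i / qd i)
        ≤ ∑ i, qs i * Real.log (qs i / qd i) :=
      (ENNReal.ofReal_le_ofReal_iff hSnn).1 h1
    have hdecomp := hC p hacs hpac
    have hBp := hB p hp hpac
    have h3 : ∑ i, p i * Real.log (p i / qs i) ≤ 0 := by
      rw [hdecomp, hBp] at h2
      rw [hA] at h2
      linarith
    exact gibbs_eq p qs hpProb.1 hqs_nonneg hpProb.2 hqs_sum hacs h3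
end

section
/- Let q† be a probability array on [n]^d, h a real array, a ∈ ℝ, B = supp(q†) ∩ supp(h), and Λ(λ) = (Σ_{i∈B} h_i q†_i e^{λh_i})/(Σ_i q†_i e^{λh_i}). Assume h is not constant on B and a ∈ range(Λ). Then the I-projection q* of q† on E'' = {p probability array : Σ_i p_i h_i = a} exists, is unique, and is given by the exponential tilting q*_i = q†_i e^{Λ^{-1}(a) h_i} / (Σ_{i'} q†_{i'} e^{Λ^{-1}(a) h_{i'}}). -/
open Real BigOperators ENNReal

lemma klArr_eq_of {ι : Type*} [Fintype ι] {p q : ι → ℝ} (h : ∀ i, q i = 0 → p i = 0) :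
    klArr p q = ENNReal.ofReal (∑ i : ι, p i * Real.log (p i / q i)) := by
  unfold klArr; rw [if_pos h]

lemma klArr_eq_top {ι : Type*} [Fintype ι] {p q : ι → ℝ} (h : ¬ ∀ i, q i = 0 → p i = 0) :
    klArr p q = ⊤ := by
  unfold klArr; rw [if_neg h]

lemma gibbs_pointwise_s13 {p q : ℝ} (hp : 0 ≤ p) (hq : 0 ≤ q) (hac : q = 0 → p = 0) :
    p - q ≤ p * Real.log (p / q) := by
  rcases eq_or_lt_of_le hp with hp0 | hp0
  · simp [← hp0, hq]
  · have hq0 : 0 < q := lt_of_le_of_ne hq (fun h => (hp0.ne' (hac h.symm)).elim)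
    have hx : 0 < q / p := div_pos hq0 hp0
    have h1 := Real.log_le_sub_one_of_pos hx
    have hlog : Real.log (p / q) = - Real.log (q / p) := by
      rw [← Real.log_inv, inv_div]
    have h2 : Real.log (q/p) * p ≤ (q/p - 1) * p := mul_le_mul_of_nonneg_right h1 hp0.le
    have h3 : (q/p - 1) * p = q - p := by field_simp
    rw [hlog]
    nlinarith

lemma gibbs_pointwise_eq {p q : ℝ} (hp : 0 ≤ p) (hq : 0 ≤ q) (hac : q = 0 → p = 0)
    (heq : p * Real.log (p / q) = p - q) : p = q := by
  rcases eq_or_lt_of_le hp with hp0 | hp0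
  · have := hp0.symm; simp [← hp0] at heq; linarith [heq]
  · have hq0 : 0 < q := lt_of_le_of_ne hq (fun h => (hp0.ne' (hac h.symm)).elim)
    by_contra hne
    have hx : 0 < q / p := div_pos hq0 hp0
    have hxne : q / p ≠ 1 := by
      intro hh
      exact hne ((div_eq_one_iff_eq hp0.ne').mp hh).symm
    have h1 := Real.log_lt_sub_one_of_pos hx hxne
    have hlog : Real.log (p / q) = - Real.log (q / p) := by
      rw [← Real.log_inv, inv_div]
    rw [hlog] at heq
    have h2 : Real.log (q/p) * p < (q/p - 1) * p := mul_lt_mul_of_pos_right h1 hp0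
    have h3 : (q/p - 1) * p = q - p := by field_simp
    nlinarith

lemma gibbs {ι : Type*} [Fintype ι] (p q : ι → ℝ) (hp : IsProbArray p)
    (hq : IsProbArray q) (hac : ∀ i, q i = 0 → p i = 0) :
    0 ≤ ∑ i, p i * Real.log (p i / q i) ∧
    (∑ i, p i * Real.log (p i / q i) = 0 → p = q) := by
  have key : ∀ i ∈ Finset.univ, p i - q i ≤ p i * Real.log (p i / q i) :=
    fun i _ => gibbs_pointwise_s13 (hp.1 i) (hq.1 i) (hac i)
  have hsum : ∑ i, (p i - q i) = 0 := by
    rw [Finset.sum_sub_distrib, hp.2, hq.2, sub_self]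
  refine ⟨?_, ?_⟩
  · calc (0:ℝ) = ∑ i, (p i - q i) := hsum.symm
      _ ≤ _ := Finset.sum_le_sum key
  · intro heq
    have hzero : ∑ i, (p i * Real.log (p i / q i) - (p i - q i)) = 0 := by
      rw [Finset.sum_sub_distrib, heq, hsum, sub_zero]
    have hall := (Finset.sum_eq_zero_iff_of_nonneg
      (fun i _ => sub_nonneg.mpr (key i (Finset.mem_univ i)))).mp hzero
    funext i
    have := hall i (Finset.mem_univ i)
    exact gibbs_pointwise_eq (hp.1 i) (hq.1 i) (hac i) (by linarith [sub_eq_zero.mp this])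

/-- The `I`-projection of `q†` on the single linear constraint set
`E'' = {p : ∑ i, p i h i = a}` exists, is unique, and is the exponential
tilting of `q†` by `λ₀ = Λ⁻¹(a)`. -/
theorem Iprojection_on_single_linear_constraint
    (d n : ℕ) (hd : 2 ≤ d) (hn : 2 ≤ n)
    (qd : (Fin d → Fin n) → ℝ) (hqd : IsProbArray qd)
    (h : (Fin d → Fin n) → ℝ) (a : ℝ)
    (B : Finset (Fin d → Fin n))
    (hB : B = Finset.univ.filter (fun i => 0 < qd i ∧ h i ≠ 0))
    (hnc : ∃ i ∈ B, ∃ i' ∈ B, h i ≠ h i')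
    (Λ : ℝ → ℝ)
    (hΛ : Λ = fun lam =>
      (∑ i ∈ B, h i * qd i * Real.exp (lam * h i)) /
      (∑ i : Fin d → Fin n, qd i * Real.exp (lam * h i)))
    (lam₀ : ℝ) (hlam₀ : Λ lam₀ = a)
    (E'' : Set ((Fin d → Fin n) → ℝ))
    (hE'' : E'' = {p | IsProbArray p ∧ ∑ i : Fin d → Fin n, p i * h i = a})
    (qs : (Fin d → Fin n) → ℝ)
    (hqs : qs = fun i =>
      qd i * Real.exp (lam₀ * h i) /
        ∑ i' : Fin d → Fin n, qd i' * Real.exp (lam₀ * h i')) :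
    qs ∈ E'' ∧
    (∀ p ∈ E'', klArr qs qd ≤ klArr p qd) ∧
    (∀ p ∈ E'', (∀ p' ∈ E'', klArr p qd ≤ klArr p' qd) → p = qs) := by
  classical
  set Z : ℝ := ∑ i' : Fin d → Fin n, qd i' * Real.exp (lam₀ * h i') with hZ
  -- Z > 0
  have hZpos : 0 < Z := by
    obtain ⟨i0, hi0⟩ : ∃ i, 0 < qd i := by
      by_contra hc
      push_neg at hc
      have : ∑ i : Fin d → Fin n, qd i = 0 :=
        Finset.sum_eq_zero (fun i _ => le_antisymm (hc i) (hqd.1 i))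
      rw [hqd.2] at this; norm_num at this
    apply Finset.sum_pos' (fun i _ => mul_nonneg (hqd.1 i) (Real.exp_pos _).le)
    exact ⟨i0, Finset.mem_univ i0, mul_pos hi0 (Real.exp_pos _)⟩
  -- qs basic facts
  have hqs_nonneg : ∀ i, 0 ≤ qs i := by
    intro i; rw [hqs]
    exact div_nonneg (mul_nonneg (hqd.1 i) (Real.exp_pos _).le) hZpos.le
  have hqs_sum : ∑ i : Fin d → Fin n, qs i = 1 := by
    rw [hqs]
    rw [← Finset.sum_div]
    exact div_self hZpos.ne'
  have hqs_prob : IsProbArray qs := ⟨hqs_nonneg, hqs_sum⟩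
  have hqs_zero : ∀ i, qd i = 0 → qs i = 0 := by
    intro i hi; rw [hqs]; simp [hi]
  have hqs_zero' : ∀ i, qs i = 0 → qd i = 0 := by
    intro i hi
    rw [hqs] at hi
    rcases div_eq_zero_iff.mp hi with hh | hh
    · rcases mul_eq_zero.mp hh with h1 | h1
      · exact h1
      · exact ((Real.exp_pos _).ne' h1).elim
    · exact (hZpos.ne' hh).elim
  -- the constraint: ∑ qs h = a
  have hBsum : ∑ i ∈ B, h i * qd i * Real.exp (lam₀ * h i)
      = ∑ i : Fin d → Fin n, h i * qd i * Real.exp (lam₀ * h i) := by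
    apply Finset.sum_subset (hB ▸ Finset.filter_subset _ _)
    intro i _ hiB
    rw [hB, Finset.mem_filter] at hiB
    push_neg at hiB
    by_cases hq0 : 0 < qd i
    · have := hiB (Finset.mem_univ i) hq0
      simp [this]
    · have : qd i = 0 := le_antisymm (not_lt.mp hq0) (hqd.1 i)
      simp [this]
  have hqs_constraint : ∑ i : Fin d → Fin n, qs i * h i = a := by
    have : ∑ i : Fin d → Fin n, qs i * h i
        = (∑ i : Fin d → Fin n, h i * qd i * Real.exp (lam₀ * h i)) / Z := by
      rw [Finset.sum_div]
      apply Finset.sum_congr rfl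
      intro i _
      simp only [hqs]
      ring
    rw [this, ← hBsum]
    rw [hΛ] at hlam₀
    exact hlam₀
  have hqsE : qs ∈ E'' := by
    rw [hE'']; exact ⟨hqs_prob, hqs_constraint⟩
  -- decomposition lemma
  have hdecomp : ∀ p : (Fin d → Fin n) → ℝ, IsProbArray p →
      (∀ i, qd i = 0 → p i = 0) → (∑ i : Fin d → Fin n, p i * h i = a) →
      ∑ i : Fin d → Fin n, p i * Real.log (p i / qd i)
        = (∑ i : Fin d → Fin n, p i * Real.log (p i / qs i)) + (lam₀ * a - Real.log Z) := by
    intro p hp hac hpa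
    have hpt : ∀ i : Fin d → Fin n, p i * Real.log (p i / qd i)
        = p i * Real.log (p i / qs i) + (lam₀ * (p i * h i) - p i * Real.log Z) := by
      intro i
      by_cases hpi : p i = 0
      · simp [hpi]
      · have hqdi : 0 < qd i := by
          rcases eq_or_lt_of_le (hqd.1 i) with h0 | h0
          · exact (hpi (hac i h0.symm)).elim
          · exact h0
        have hqsi : 0 < qs i := by
          rw [hqs]
          exact div_pos (mul_pos hqdi (Real.exp_pos _)) hZpos
        have hratio : qs i / qd i = Real.exp (lam₀ * h i) / Z := by
          rw [hqs]
          field_simp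
        have hlogratio : Real.log (qs i / qd i) = lam₀ * h i - Real.log Z := by
          rw [hratio, Real.log_div (Real.exp_ne_zero _) hZpos.ne', Real.log_exp]
        have hpq : p i / qd i = (p i / qs i) * (qs i / qd i) := by
          field_simp
        rw [hpq, Real.log_mul, hlogratio]
        · ring
        · exact (div_pos (lt_of_le_of_ne (hp.1 i) (Ne.symm hpi)) hqsi).ne'
        · rw [hratio]; exact (div_pos (Real.exp_pos _) hZpos).ne'
    calc ∑ i : Fin d → Fin n, p i * Real.log (p i / qd i)
        = ∑ i : Fin d → Fin n, (p i * Real.log (p i / qs i)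
            + (lam₀ * (p i * h i) - p i * Real.log Z)) :=
          Finset.sum_congr rfl (fun i _ => hpt i)
      _ = (∑ i : Fin d → Fin n, p i * Real.log (p i / qs i))
            + (lam₀ * ∑ i : Fin d → Fin n, p i * h i
              - (∑ i : Fin d → Fin n, p i) * Real.log Z) := by
          rw [Finset.sum_add_distrib, Finset.sum_sub_distrib, ← Finset.mul_sum,
            ← Finset.sum_mul]
      _ = _ := by rw [hpa, hp.2, one_mul]
  -- S_qs
  have hqs_self : ∑ i : Fin d → Fin n, qs i * Real.log (qs i / qs i) = 0 := by
    apply Finset.sum_eq_zero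
    intro i _
    by_cases hi : qs i = 0
    · simp [hi]
    · rw [div_self hi, Real.log_one, mul_zero]
  have hSqs : ∑ i : Fin d → Fin n, qs i * Real.log (qs i / qd i)
      = lam₀ * a - Real.log Z := by
    rw [hdecomp qs hqs_prob hqs_zero hqs_constraint, hqs_self, zero_add]
  have hSqs_nonneg : 0 ≤ ∑ i : Fin d → Fin n, qs i * Real.log (qs i / qd i) :=
    (gibbs qs qd hqs_prob hqd hqs_zero).1
  have hklqs : klArr qs qd
      = ENNReal.ofReal (∑ i : Fin d → Fin n, qs i * Real.log (qs i / qd i)) :=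
    klArr_eq_of hqs_zero
  -- minimality
  have hmin : ∀ p ∈ E'', klArr qs qd ≤ klArr p qd := by
    intro p hp
    rw [hE''] at hp
    obtain ⟨hpprob, hpa⟩ := hp
    by_cases hac : ∀ i, qd i = 0 → p i = 0
    · rw [hklqs, klArr_eq_of hac]
      apply ENNReal.ofReal_le_ofReal
      rw [hdecomp p hpprob hac hpa, hSqs]
      have hac' : ∀ i, qs i = 0 → p i = 0 := fun i hi => hac i (hqs_zero' i hi)
      linarith [(gibbs p qs hpprob hqs_prob hac').1]
    · rw [klArr_eq_top hac]
      exact le_top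
  refine ⟨hqsE, hmin, ?_⟩
  -- uniqueness
  intro p hp hpmin
  have hple := hpmin qs hqsE
  have hp' := hp
  rw [hE''] at hp'
  obtain ⟨hpprob, hpa⟩ := hp'
  have hac : ∀ i, qd i = 0 → p i = 0 := by
    by_contra hc
    rw [klArr_eq_top hc, hklqs, top_le_iff] at hple
    exact ENNReal.ofReal_ne_top hple
  rw [klArr_eq_of hac, hklqs] at hple
  have hac' : ∀ i, qs i = 0 → p i = 0 := fun i hi => hac i (hqs_zero' i hi)
  have hD := gibbs p qs hpprob hqs_prob hac'
  have hSp := hdecomp p hpprob hac hpa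
  have hle' : ∑ i : Fin d → Fin n, p i * Real.log (p i / qd i)
      ≤ ∑ i : Fin d → Fin n, qs i * Real.log (qs i / qd i) :=
    (ENNReal.ofReal_le_ofReal_iff hSqs_nonneg).mp hple
  rw [hSqs] at hle'
  have hDzero : ∑ i : Fin d → Fin n, p i * Real.log (p i / qs i) = 0 := by
    linarith [hD.1, hSp, hle']
  exact hD.2 hDzero
end

section
/- With q†, h, a, Λ as above: if there exists a probability array p with Σ_i p_i h_i = a and supp(p) = supp(q†), then a belongs to the range of Λ. -/
open Real Filter BigOperators

lemma G_hasDerivAt {ι : Type*} [Fintype ι] (q c : ι → ℝ) (lam : ℝ) :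
    HasDerivAt (fun x => ∑ i : ι, q i * Real.exp (x * c i))
      (∑ i : ι, q i * (c i * Real.exp (lam * c i))) lam := by
  apply HasDerivAt.fun_sum
  intro i _
  have h1 : HasDerivAt (fun x : ℝ => x * c i) (c i) lam := hasDerivAt_mul_const (c i)
  have h3 := (h1.exp).const_mul (q i)
  convert h3 using 1
  · rfl
  ring

lemma exists_critical {ι : Type*} [Fintype ι] (q c : ι → ℝ)
    (hq0 : ∀ i, 0 ≤ q i)
    (hplus : ∃ i, 0 < q i ∧ 0 < c i) (hminus : ∃ i, 0 < q i ∧ c i < 0) :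
    ∃ lam : ℝ, ∑ i : ι, q i * (c i * Real.exp (lam * c i)) = 0 := by
  set G : ℝ → ℝ := fun x => ∑ i : ι, q i * Real.exp (x * c i) with hG
  have hcont : Continuous G := by
    apply continuous_finset_sum
    intro i _
    exact (continuous_const.mul ((continuous_id.mul continuous_const).rexp))
  obtain ⟨i₀, hi₀q, hi₀c⟩ := hplus
  obtain ⟨j₀, hj₀q, hj₀c⟩ := hminus
  have hbound : ∀ (k : ι) (x : ℝ), q k * Real.exp (x * c k) ≤ G x := by
    intro k x
    have : ∀ i ∈ Finset.univ, 0 ≤ q i * Real.exp (x * c i) :=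
      fun i _ => mul_nonneg (hq0 i) (Real.exp_pos _).le
    exact Finset.single_le_sum this (Finset.mem_univ k)
  have htop : Tendsto G atTop atTop := by
    apply Filter.tendsto_atTop_mono (hbound i₀)
    exact Filter.Tendsto.const_mul_atTop hi₀q
      (Real.tendsto_exp_atTop.comp (Filter.Tendsto.atTop_mul_const hi₀c tendsto_id))
  have hbot : Tendsto G atBot atTop := by
    apply Filter.tendsto_atTop_mono (hbound j₀)
    apply Filter.Tendsto.const_mul_atTop hj₀q
    apply Real.tendsto_exp_atTop.comp
    exact Filter.Tendsto.atBot_mul_const_of_neg hj₀c tendsto_id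
  obtain ⟨M, hM⟩ := (htop.eventually (Filter.eventually_ge_atTop (G 0 + 1))).exists_forall_of_atTop
  obtain ⟨M', hM'⟩ := (hbot.eventually (Filter.eventually_ge_atTop (G 0 + 1))).exists_forall_of_atBot
  set R : ℝ := max (max M (-M')) 1 with hRdef
  have hR1 : (1:ℝ) ≤ R := le_max_right _ _
  have hcomp : IsCompact (Set.Icc (-R) R) := isCompact_Icc
  have hne : (Set.Icc (-R) R).Nonempty := ⟨0, by constructor <;> linarith⟩
  obtain ⟨lam, hlammem, hlammin⟩ := hcomp.exists_isMinOn hne hcont.continuousOn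
  have hglobal : ∀ x, G lam ≤ G x := by
    intro x
    by_cases hx : x ∈ Set.Icc (-R) R
    · exact hlammin hx
    · have h0mem : (0:ℝ) ∈ Set.Icc (-R) R := ⟨by linarith, by linarith⟩
      have hle : G lam ≤ G 0 := hlammin h0mem
      rcases not_and_or.mp (fun hc => hx ⟨hc.1, hc.2⟩ : ¬ (-R ≤ x ∧ x ≤ R)) with h1 | h2
      · push_neg at h1
        have hxM' : x ≤ M' := by
          have : -M' ≤ R := le_trans (le_max_right M (-M')) (le_max_left _ _)
          linarith
        have := hM' x hxM'
        linarith
      · push_neg at h2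
        have hxM : M ≤ x := by
          have : M ≤ R := le_trans (le_max_left M (-M')) (le_max_left _ _)
          linarith
        have := hM x hxM
        linarith
  have hmin : IsMinOn G Set.univ lam := fun x _ => hglobal x
  have hlocal : IsLocalMin G lam := hmin.isLocalMin Filter.univ_mem
  exact ⟨lam, hlocal.hasDerivAt_eq_zero (G_hasDerivAt q c lam)⟩

/-- If there is a probability array `p` with `∑ i, p i h i = a` and
`supp p = supp q†`, then `a` belongs to the range of `Λ`. -/
theorem mem_range_Lambda_of_exists_fullSupport
    (d n : ℕ) (hd : 2 ≤ d) (hn : 2 ≤ n)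
    (qd : (Fin d → Fin n) → ℝ) (hqd : IsProbArray qd)
    (h : (Fin d → Fin n) → ℝ) (a : ℝ)
    (B : Finset (Fin d → Fin n))
    (hB : B = Finset.univ.filter (fun i => 0 < qd i ∧ h i ≠ 0))
    (Λ : ℝ → ℝ)
    (hΛ : Λ = fun lam =>
      (∑ i ∈ B, h i * qd i * Real.exp (lam * h i)) /
      (∑ i : Fin d → Fin n, qd i * Real.exp (lam * h i)))
    (hexists : ∃ p : (Fin d → Fin n) → ℝ, IsProbArray p ∧
      (∑ i : Fin d → Fin n, p i * h i = a) ∧ (∀ i, 0 < p i ↔ 0 < qd i)) :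
    a ∈ Set.range Λ := by
  obtain ⟨p, ⟨hp0, hp1⟩, hpa, hpq⟩ := hexists
  obtain ⟨hq0, hq1⟩ := hqd
  -- extension of the numerator sum from B to univ
  have hsumB : ∀ lam : ℝ, ∑ i ∈ B, h i * qd i * Real.exp (lam * h i)
      = ∑ i : Fin d → Fin n, h i * qd i * Real.exp (lam * h i) := by
    intro lam
    apply Finset.sum_subset (Finset.subset_univ B)
    intro i _ hiB
    rw [hB, Finset.mem_filter] at hiB
    push_neg at hiB
    rcases lt_or_eq_of_le (hq0 i) with hqi | hqi
    · have := hiB (Finset.mem_univ i) hqi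
      simp [this]
    · simp [← hqi]
  -- denominator positivity
  have hqex : ∃ i, 0 < qd i := by
    by_contra hc
    push_neg at hc
    have : ∀ i, qd i = 0 := fun i => le_antisymm (hc i) (hq0 i)
    simp [this] at hq1
  have hD : ∀ lam : ℝ, 0 < ∑ i : Fin d → Fin n, qd i * Real.exp (lam * h i) := by
    intro lam
    obtain ⟨i₀, hi₀⟩ := hqex
    have h1 : ∀ i ∈ Finset.univ, 0 ≤ qd i * Real.exp (lam * h i) :=
      fun i _ => mul_nonneg (hq0 i) (Real.exp_pos _).le
    have h2 : 0 < qd i₀ * Real.exp (lam * h i₀) := mul_pos hi₀ (Real.exp_pos _)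
    calc 0 < qd i₀ * Real.exp (lam * h i₀) := h2
    _ ≤ _ := Finset.single_le_sum h1 (Finset.mem_univ i₀)
  -- suffices to find a critical point
  have hsuff : ∀ lam : ℝ,
      (∑ i : Fin d → Fin n, qd i * ((h i - a) * Real.exp (lam * h i))) = 0 →
      Λ lam = a := by
    intro lam hcrit
    have key : ∑ i : Fin d → Fin n, h i * qd i * Real.exp (lam * h i)
        = a * ∑ i : Fin d → Fin n, qd i * Real.exp (lam * h i) := by
      have h1 : ∑ i : Fin d → Fin n,
          (h i * qd i * Real.exp (lam * h i) - a * (qd i * Real.exp (lam * h i))) = 0 := by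
        rw [← hcrit]
        apply Finset.sum_congr rfl
        intro i _
        ring
      rw [Finset.sum_sub_distrib, ← Finset.mul_sum] at h1
      linarith
    rw [hΛ]
    simp only
    rw [hsumB lam, key, mul_div_assoc, div_self (hD lam).ne', mul_one]
  by_cases hdeg : ∀ i, 0 < qd i → h i = a
  · refine ⟨0, hsuff 0 ?_⟩
    apply Finset.sum_eq_zero
    intro i _
    rcases lt_or_eq_of_le (hq0 i) with hqi | hqi
    · rw [hdeg i hqi]
      ring
    · rw [← hqi]
      ring
  · -- nondegenerate case: both signs of h i - a occur on the support
    push_neg at hdeg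
    obtain ⟨i₀, hi₀q, hi₀a⟩ := hdeg
    have hpsum : ∑ i : Fin d → Fin n, p i * (h i - a) = 0 := by
      have e1 : ∑ i : Fin d → Fin n, p i * (h i - a)
          = ∑ i : Fin d → Fin n, (p i * h i - a * p i) := by
        apply Finset.sum_congr rfl
        intro i _
        ring
      rw [e1, Finset.sum_sub_distrib, ← Finset.mul_sum, hpa, hp1]
      ring
    have hpi₀ : 0 < p i₀ := (hpq i₀).mpr hi₀q
    have hplus : ∃ i, 0 < qd i ∧ 0 < h i - a := by
      by_contra hc
      push_neg at hc
      have hi₀neg : h i₀ - a < 0 :=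
        lt_of_le_of_ne (by linarith [hc i₀ hi₀q]) (sub_ne_zero.mpr hi₀a)
      have hall : ∀ i ∈ Finset.univ, p i * (h i - a) ≤ (fun _ => (0:ℝ)) i := by
        intro i _
        show p i * (h i - a) ≤ 0
        rcases lt_or_eq_of_le (hp0 i) with h' | h'
        · have := hc i ((hpq i).mp h')
          nlinarith [hp0 i]
        · rw [← h']
          simp
      have hlt := Finset.sum_lt_sum hall
        ⟨i₀, Finset.mem_univ i₀, mul_neg_of_pos_of_neg hpi₀ hi₀neg⟩
      simp only [Finset.sum_const_zero] at hlt
      linarith [hpsum]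
    have hminus : ∃ i, 0 < qd i ∧ h i - a < 0 := by
      by_contra hc
      push_neg at hc
      have hall : ∀ i ∈ Finset.univ, 0 ≤ p i * (h i - a) := by
        intro i _
        rcases lt_or_eq_of_le (hp0 i) with h' | h'
        · have := hc i ((hpq i).mp h')
          nlinarith [hp0 i]
        · rw [← h']
          simp
      obtain ⟨j, hjq, hja⟩ := hplus
      have hpj : 0 < p j := (hpq j).mpr hjq
      have hpos : 0 < p j * (h j - a) := mul_pos hpj hja
      have hgt : 0 < ∑ i : Fin d → Fin n, p i * (h i - a) :=
        lt_of_lt_of_le hpos (Finset.single_le_sum hall (Finset.mem_univ j))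
      linarith [hpsum]
    obtain ⟨lam, hlam⟩ := exists_critical qd (fun i => h i - a) hq0 hplus hminus
    refine ⟨lam, hsuff lam ?_⟩
    -- convert: exp(lam*(h i - a)) * exp(lam * a) = exp(lam * h i)
    have h2 : ∑ i : Fin d → Fin n, qd i * ((h i - a) * Real.exp (lam * h i))
        = (∑ i : Fin d → Fin n, qd i * ((h i - a) * Real.exp (lam * (h i - a)))) *
          Real.exp (lam * a) := by
      rw [Finset.sum_mul]
      apply Finset.sum_congr rfl
      intro i _
      rw [mul_assoc, mul_assoc, ← Real.exp_add]
      ring_nf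
    rw [h2, hlam, zero_mul]
end
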